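/- With G, f, L as above, the on-diagonal values of higher derivatives are: ∂²_{xk}L(x,x) = (e^{f(x,x)}/(ς√(2π)))(1/16 + 3/(8ς²) + 3/(2ς⁴)); ∂³_{xxk}L(x,x) = (e^{f(x,x)}/(ς√(2π)))(1/32 + 1/(8ς²)); and (∂⁴_{xxxk} − ∂³_{xxk})L(x,x) = (e^{f(x,x)}/(ς√(2π)))(−1/64 − 5/(32ς²) − 3/(2ς⁴) − 15/(2ς⁶)). -/

import Mathlib

/-- The function `f(x,k)` from the paper. -/
noncomputable def fBS (ς x k : ℝ) : ℝ := (x + k)/2 - (x - k)^2/(2*ς^2) - ς^2/8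

/-- The function `G(x,k) = e^{f(x,k)}/(ς√(2π))`. -/
noncomputable def GBS (ς x k : ℝ) : ℝ := Real.exp (fBS ς x k) / (ς * Real.sqrt (2*Real.pi))

/-- `L := (1/4)∂ₓG + (1/2)∂²_{xk}G`. -/
noncomputable def LBS (ς x k : ℝ) : ℝ :=
  (1/4) * deriv (fun x' => GBS ς x' k) x
    + (1/2) * deriv (fun k' => deriv (fun x' => GBS ς x' k') x) k

/-- `∂ₓL`. -/
noncomputable def LBSx (ς x k : ℝ) : ℝ := deriv (fun x' => LBS ς x' k) x

/-- `∂²ₓL`. -/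
noncomputable def LBSxx (ς x k : ℝ) : ℝ := deriv (fun x' => LBSx ς x' k) x

/-- `∂³ₓL`. -/
noncomputable def LBSxxx (ς x k : ℝ) : ℝ := deriv (fun x' => LBSxx ς x' k) x

/-- generic quintic -/
noncomputable def PP (a0 a1 a2 a3 a4 a5 t : ℝ) : ℝ :=
  a0 + a1*t + a2*t^2 + a3*t^3 + a4*t^4 + a5*t^5

lemma hPP (a0 a1 a2 a3 a4 a5 u : ℝ) :
    HasDerivAt (fun t => PP a0 a1 a2 a3 a4 a5 t)
      (a1 + 2*a2*u + 3*a3*u^2 + 4*a4*u^3 + 5*a5*u^4) u := by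
  unfold PP
  have h := (((((hasDerivAt_const u a0).add ((hasDerivAt_id u).const_mul a1)).add
      ((hasDerivAt_pow 2 u).const_mul a2)).add
      ((hasDerivAt_pow 3 u).const_mul a3)).add
      ((hasDerivAt_pow 4 u).const_mul a4)).add
      ((hasDerivAt_pow 5 u).const_mul a5)
  exact h.congr_deriv (by push_cast; ring_nf)

lemma hGx (ς : ℝ) (hς : ς ≠ 0) (x k : ℝ) :
    HasDerivAt (fun x' => GBS ς x' k) ((1/2 - (x-k)/ς^2) * GBS ς x k) x := by
  unfold GBS fBS
  have hf : HasDerivAt (fun x' => (x' + k)/2 - (x' - k)^2/(2*ς^2) - ς^2/8)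
      (1/2 - (x-k)/ς^2) x := by
    have h := ((((hasDerivAt_id x).add_const k).div_const 2).sub
      ((((hasDerivAt_id x).sub_const k).pow 2).div_const (2*ς^2))).sub_const (ς^2/8)
    exact h.congr_deriv (by simp only [id_eq]; push_cast; field_simp)
  have := hf.exp.div_const (ς * Real.sqrt (2*Real.pi))
  exact this.congr_deriv (by ring)

lemma hGk (ς : ℝ) (hς : ς ≠ 0) (x k : ℝ) :
    HasDerivAt (fun k' => GBS ς x k') ((1/2 + (x-k)/ς^2) * GBS ς x k) k := by
  unfold GBS fBS
  have hf : HasDerivAt (fun k' => (x + k')/2 - (x - k')^2/(2*ς^2) - ς^2/8)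
      (1/2 + (x-k)/ς^2) k := by
    have h := ((((hasDerivAt_id k).const_add x).div_const 2).sub
      ((((hasDerivAt_id k).const_sub x).pow 2).div_const (2*ς^2))).sub_const (ς^2/8)
    exact h.congr_deriv (by simp only [id_eq]; push_cast; field_simp; ring)
  have := hf.exp.div_const (ς * Real.sqrt (2*Real.pi))
  exact this.congr_deriv (by ring)


lemma LBS_eq (ς : ℝ) (hς : ς ≠ 0) (x k : ℝ) :
    LBS ς x k = PP (1/4 + 1/(2*ς^2)) (-(1/(4*ς^2))) (-(1/(2*ς^4))) 0 0 0 (x-k)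
      * GBS ς x k := by
  unfold LBS
  rw [(hGx ς hς x k).deriv]
  have h1 : (fun k' => deriv (fun x' => GBS ς x' k') x)
      = fun k' => (1/2 - (x-k')/ς^2) * GBS ς x k' :=
    funext fun k' => (hGx ς hς x k').deriv
  rw [h1]
  have hc : HasDerivAt (fun k' => 1/2 - (x-k')/ς^2) (1/ς^2) k := by
    have h := (HasDerivAt.const_sub (1/2) (((hasDerivAt_id k).const_sub x).div_const (ς^2)))
    exact h.congr_deriv (by field_simp)
  erw [(hc.mul (hGk ς hς x k)).deriv]
  unfold PP
  field_simp
  ring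

lemma LBSx_eq (ς : ℝ) (hς : ς ≠ 0) (x k : ℝ) :
    LBSx ς x k = PP (1/8) (-(3/(8*ς^2)) - 3/(2*ς^4)) 0 (1/(2*ς^6)) 0 0 (x-k)
      * GBS ς x k := by
  unfold LBSx
  have h1 : (fun x' => LBS ς x' k)
      = fun x' => PP (1/4 + 1/(2*ς^2)) (-(1/(4*ς^2))) (-(1/(2*ς^4))) 0 0 0 (x'-k)
          * GBS ς x' k := funext fun x' => LBS_eq ς hς x' k
  rw [h1]
  have hp : HasDerivAt (fun x' => PP (1/4 + 1/(2*ς^2)) (-(1/(4*ς^2))) (-(1/(2*ς^4))) 0 0 0 (x'-k))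
      ((-(1/(4*ς^2)) + 2*(-(1/(2*ς^4)))*(x-k) + 3*0*(x-k)^2 + 4*0*(x-k)^3 + 5*0*(x-k)^4) * 1) x :=
    by exact (hPP _ _ _ _ _ _ (x-k)).comp x ((hasDerivAt_id x).sub_const k)
  erw [(hp.mul (hGx ς hς x k)).deriv]
  unfold PP
  field_simp
  ring

lemma LBSxx_eq (ς : ℝ) (hς : ς ≠ 0) (x k : ℝ) :
    LBSxx ς x k = PP (1/16 - 3/(8*ς^2) - 3/(2*ς^4)) (-(5/(16*ς^2)) - 3/(4*ς^4))
      (3/(8*ς^4) + 3/ς^6) (1/(4*ς^6)) (-(1/(2*ς^8))) 0 (x-k) * GBS ς x k := by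
  unfold LBSxx
  have h1 : (fun x' => LBSx ς x' k)
      = fun x' => PP (1/8) (-(3/(8*ς^2)) - 3/(2*ς^4)) 0 (1/(2*ς^6)) 0 0 (x'-k)
          * GBS ς x' k := funext fun x' => LBSx_eq ς hς x' k
  rw [h1]
  have hp : HasDerivAt (fun x' => PP (1/8) (-(3/(8*ς^2)) - 3/(2*ς^4)) 0 (1/(2*ς^6)) 0 0 (x'-k))
      (((-(3/(8*ς^2)) - 3/(2*ς^4)) + 2*0*(x-k) + 3*(1/(2*ς^6))*(x-k)^2 + 4*0*(x-k)^3 + 5*0*(x-k)^4) * 1) x :=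
    by exact (hPP _ _ _ _ _ _ (x-k)).comp x ((hasDerivAt_id x).sub_const k)
  erw [(hp.mul (hGx ς hς x k)).deriv]
  unfold PP
  field_simp
  ring

lemma LBSxxx_eq (ς : ℝ) (hς : ς ≠ 0) (x k : ℝ) :
    LBSxxx ς x k = PP (1/32 - 1/(2*ς^2) - 3/(2*ς^4))
      (-(7/(32*ς^2)) + 3/(4*ς^4) + 15/(2*ς^6)) (1/(2*ς^4) + 3/ς^6)
      (-(1/(4*ς^6)) - 5/ς^8) (-(1/(2*ς^8))) (1/(2*ς^10)) (x-k) * GBS ς x k := by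
  unfold LBSxxx
  have h1 : (fun x' => LBSxx ς x' k)
      = fun x' => PP (1/16 - 3/(8*ς^2) - 3/(2*ς^4)) (-(5/(16*ς^2)) - 3/(4*ς^4))
          (3/(8*ς^4) + 3/ς^6) (1/(4*ς^6)) (-(1/(2*ς^8))) 0 (x'-k)
          * GBS ς x' k := funext fun x' => LBSxx_eq ς hς x' k
  rw [h1]
  have hp : HasDerivAt (fun x' => PP (1/16 - 3/(8*ς^2) - 3/(2*ς^4)) (-(5/(16*ς^2)) - 3/(4*ς^4))
        (3/(8*ς^4) + 3/ς^6) (1/(4*ς^6)) (-(1/(2*ς^8))) 0 (x'-k))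
      (((-(5/(16*ς^2)) - 3/(4*ς^4)) + 2*(3/(8*ς^4) + 3/ς^6)*(x-k) + 3*(1/(4*ς^6))*(x-k)^2
        + 4*(-(1/(2*ς^8)))*(x-k)^3 + 5*0*(x-k)^4) * 1) x :=
    by exact (hPP _ _ _ _ _ _ (x-k)).comp x ((hasDerivAt_id x).sub_const k)
  erw [(hp.mul (hGx ς hς x k)).deriv]
  unfold PP
  field_simp
  ring

theorem stmt_7 (ς : ℝ) (hς : 0 < ς) (x : ℝ) :
    (deriv (fun k => LBSx ς x k) x
      = Real.exp (fBS ς x x) / (ς * Real.sqrt (2*Real.pi))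
        * (1/16 + 3/(8*ς^2) + 3/(2*ς^4))) ∧
    (deriv (fun k => LBSxx ς x k) x
      = Real.exp (fBS ς x x) / (ς * Real.sqrt (2*Real.pi)) * (1/32 + 1/(8*ς^2))) ∧
    (deriv (fun k => LBSxxx ς x k) x - deriv (fun k => LBSxx ς x k) x
      = Real.exp (fBS ς x x) / (ς * Real.sqrt (2*Real.pi))
        * (-(1/64) - 5/(32*ς^2) - 3/(2*ς^4) - 15/(2*ς^6))) := by
  have hςne : ς ≠ 0 := ne_of_gt hς
  have hdx : deriv (fun k => LBSx ς x k) x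
      = Real.exp (fBS ς x x) / (ς * Real.sqrt (2*Real.pi))
        * (1/16 + 3/(8*ς^2) + 3/(2*ς^4)) := by
    have h1 : (fun k => LBSx ς x k)
        = fun k => PP (1/8) (-(3/(8*ς^2)) - 3/(2*ς^4)) 0 (1/(2*ς^6)) 0 0 (x-k)
            * GBS ς x k := funext fun k => LBSx_eq ς hςne x k
    rw [h1]
    have hp : HasDerivAt (fun k => PP (1/8) (-(3/(8*ς^2)) - 3/(2*ς^4)) 0 (1/(2*ς^6)) 0 0 (x-k))
        (((-(3/(8*ς^2)) - 3/(2*ς^4)) + 2*0*(x-x) + 3*(1/(2*ς^6))*(x-x)^2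
          + 4*0*(x-x)^3 + 5*0*(x-x)^4) * (-1)) x :=
      by exact (hPP _ _ _ _ _ _ (x-x)).comp x ((hasDerivAt_id x).const_sub x)
    erw [(hp.mul (hGk ς hςne x x)).deriv]
    unfold PP GBS
    field_simp
    ring
  have hdxx : deriv (fun k => LBSxx ς x k) x
      = Real.exp (fBS ς x x) / (ς * Real.sqrt (2*Real.pi)) * (1/32 + 1/(8*ς^2)) := by
    have h1 : (fun k => LBSxx ς x k)
        = fun k => PP (1/16 - 3/(8*ς^2) - 3/(2*ς^4)) (-(5/(16*ς^2)) - 3/(4*ς^4))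
            (3/(8*ς^4) + 3/ς^6) (1/(4*ς^6)) (-(1/(2*ς^8))) 0 (x-k)
            * GBS ς x k := funext fun k => LBSxx_eq ς hςne x k
    rw [h1]
    have hp : HasDerivAt (fun k => PP (1/16 - 3/(8*ς^2) - 3/(2*ς^4)) (-(5/(16*ς^2)) - 3/(4*ς^4))
          (3/(8*ς^4) + 3/ς^6) (1/(4*ς^6)) (-(1/(2*ς^8))) 0 (x-k))
        (((-(5/(16*ς^2)) - 3/(4*ς^4)) + 2*(3/(8*ς^4) + 3/ς^6)*(x-x) + 3*(1/(4*ς^6))*(x-x)^2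
          + 4*(-(1/(2*ς^8)))*(x-x)^3 + 5*0*(x-x)^4) * (-1)) x :=
      by exact (hPP _ _ _ _ _ _ (x-x)).comp x ((hasDerivAt_id x).const_sub x)
    erw [(hp.mul (hGk ς hςne x x)).deriv]
    unfold PP GBS
    field_simp
    ring
  have hdxxx : deriv (fun k => LBSxxx ς x k) x
      = Real.exp (fBS ς x x) / (ς * Real.sqrt (2*Real.pi))
        * (1/64 - 1/(32*ς^2) - 3/(2*ς^4) - 15/(2*ς^6)) := by
    have h1 : (fun k => LBSxxx ς x k)
        = fun k => PP (1/32 - 1/(2*ς^2) - 3/(2*ς^4))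
            (-(7/(32*ς^2)) + 3/(4*ς^4) + 15/(2*ς^6)) (1/(2*ς^4) + 3/ς^6)
            (-(1/(4*ς^6)) - 5/ς^8) (-(1/(2*ς^8))) (1/(2*ς^10)) (x-k)
            * GBS ς x k := funext fun k => LBSxxx_eq ς hςne x k
    rw [h1]
    have hp : HasDerivAt (fun k => PP (1/32 - 1/(2*ς^2) - 3/(2*ς^4))
          (-(7/(32*ς^2)) + 3/(4*ς^4) + 15/(2*ς^6)) (1/(2*ς^4) + 3/ς^6)
          (-(1/(4*ς^6)) - 5/ς^8) (-(1/(2*ς^8))) (1/(2*ς^10)) (x-k))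
        (((-(7/(32*ς^2)) + 3/(4*ς^4) + 15/(2*ς^6)) + 2*(1/(2*ς^4) + 3/ς^6)*(x-x)
          + 3*(-(1/(4*ς^6)) - 5/ς^8)*(x-x)^2 + 4*(-(1/(2*ς^8)))*(x-x)^3
          + 5*(1/(2*ς^10))*(x-x)^4) * (-1)) x :=
      by exact (hPP _ _ _ _ _ _ (x-x)).comp x ((hasDerivAt_id x).const_sub x)
    erw [(hp.mul (hGk ς hςne x x)).deriv]
    unfold PP GBS
    field_simp
    ring
  refine ⟨hdx, hdxx, ?_⟩
  rw [hdxxx, hdxx]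
  field_simp
  ring
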